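/- Let $-\xi$ be a subordinator with killing rate $q\ge0$, drift $d>0$ and finite Lévy measure $\Pi$, and let $k$ be the density of $I=\int_0^\zeta e^{\xi_s}ds$, which satisfies $(1/d - t)\,k(t)\,d = \int_0^\infty(\mathbb{P}(I>t)-\mathbb{P}(I>te^v))\Pi(dv)+q\,\mathbb{P}(I>t)$ for $t<1/d$. Then $(1/d - t)\,k(t)/\mathbb{P}(I>t) \to (\Pi(0,\infty)+q)/d$ as $t\uparrow 1/d$. -/

import Mathlib

open MeasureTheory Filter Real Set
open scoped ENNReal Topology

theorem stmt9 (d q : ℝ) (hd : 0 < d) (hq : 0 ≤ q)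
    (Pim : Measure ℝ) [IsFiniteMeasure Pim] (hsupp : ∀ᵐ x ∂Pim, 0 < x)
    (ν : Measure ℝ) [IsProbabilityMeasure ν]
    (k : ℝ → ℝ)
    (hT0 : ∀ t ≥ 1/d, ν (Set.Ioi t) = 0)
    (hTpos : ∀ t < 1/d, 0 < (ν (Set.Ioi t)).toReal)
    (heq : ∀ t ∈ Set.Ico (0:ℝ) (1/d),
      (1/d - t) * k t * d =
        (∫ v in Set.Ioi (0:ℝ),
          ((ν (Set.Ioi t)).toReal - (ν (Set.Ioi (t * Real.exp v))).toReal) ∂Pim)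
        + q * (ν (Set.Ioi t)).toReal) :
    Tendsto (fun t => (1/d - t) * k t / (ν (Set.Ioi t)).toReal)
      (𝓝[<] (1/d)) (𝓝 (((Pim (Set.Ioi (0:ℝ))).toReal + q) / d)) := by
  have hdpos : (0:ℝ) < 1/d := by positivity
  set P : ℝ → ℝ := fun t => (ν (Set.Ioi t)).toReal with hPdef
  have hPnn : ∀ t, 0 ≤ P t := fun t => ENNReal.toReal_nonneg
  have hP1 : ∀ t, P t ≤ 1 := by
    intro t
    have := measure_mono (μ := ν) (Set.subset_univ (Set.Ioi t))
    simpa [P] using ENNReal.toReal_mono (by simp) this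
  have hPanti : Antitone P := by
    intro s t hst
    exact ENNReal.toReal_mono (by simp [measure_ne_top])
      (measure_mono (Set.Ioi_subset_Ioi hst))
  have hPmeas : Measurable P := by
    have hA : Antitone (fun t => ν (Set.Ioi t)) :=
      fun s t h => measure_mono (Set.Ioi_subset_Ioi h)
    exact ENNReal.measurable_toReal.comp hA.measurable
  -- epsilon function
  set ε : ℝ → ℝ := fun t => Real.log (1/(d*t)) with hεdef
  -- eventually facts
  have hmem : ∀ᶠ t in 𝓝[<] (1/d), t ∈ Set.Ioo 0 (1/d) := by
    filter_upwards [eventually_nhdsWithin_of_eventually_nhds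
      (eventually_gt_nhds hdpos), self_mem_nhdsWithin] with t h1 h2
    exact ⟨h1, h2⟩
  -- limit of Ioc measure
  have hIoc : Tendsto (fun r => Pim (Set.Ioc 0 r)) (𝓝[>] (0:ℝ)) (𝓝 0) := by
    have h := tendsto_measure_biInter_gt (μ := Pim) (s := fun r => Set.Ioc (0:ℝ) r)
      (a := 0) (fun r _ => measurableSet_Ioc.nullMeasurableSet)
      (fun i j _ hij => Set.Ioc_subset_Ioc_right hij) ⟨1, one_pos, measure_ne_top _ _⟩
    have : (⋂ r > (0:ℝ), Set.Ioc 0 r) = ∅ := by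
      refine Set.eq_empty_iff_forall_notMem.2 (fun x hx => ?_)
      have h1 := Set.mem_iInter₂.1 hx
      have hx1 := (h1 1 one_pos).1
      have hx2 := (h1 (x/2) (half_pos hx1)).2
      linarith
    rw [this] at h
    simpa [Function.comp_def] using h
  have hIoi : Tendsto (fun r => (Pim (Set.Ioi r)).toReal) (𝓝[>] (0:ℝ))
      (𝓝 ((Pim (Set.Ioi 0)).toReal)) := by
    have htoReal : Tendsto (fun r => (Pim (Set.Ioc 0 r)).toReal) (𝓝[>] (0:ℝ)) (𝓝 0) := by
      have := (ENNReal.tendsto_toReal (by simp : (0:ℝ≥0∞) ≠ ⊤)).comp hIoc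
      simpa [Function.comp_def] using this
    have hsub : Tendsto (fun r => (Pim (Set.Ioi 0)).toReal - (Pim (Set.Ioc 0 r)).toReal)
        (𝓝[>] (0:ℝ)) (𝓝 ((Pim (Set.Ioi 0)).toReal)) := by
      simpa using (tendsto_const_nhds.sub htoReal)
    refine hsub.congr' ?_
    filter_upwards [self_mem_nhdsWithin] with r (hr : 0 < r)
    have hunion : Set.Ioc (0:ℝ) r ∪ Set.Ioi r = Set.Ioi 0 := Set.Ioc_union_Ioi_eq_Ioi hr.le
    have hdisj : Disjoint (Set.Ioc (0:ℝ) r) (Set.Ioi r) := Set.Ioc_disjoint_Ioi le_rfl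
    have := measure_union hdisj measurableSet_Ioi (μ := Pim)
    rw [hunion] at this
    rw [this, ENNReal.toReal_add (measure_ne_top _ _) (measure_ne_top _ _)]
    ring
  -- epsilon tends to 0 within Ioi 0
  have hεt : Tendsto ε (𝓝[<] (1/d)) (𝓝[>] (0:ℝ)) := by
    have h3 : (1:ℝ)/(d*(1/d)) = 1 := by
      rw [mul_one_div_cancel hd.ne']; norm_num
    have h1 : Tendsto ε (𝓝[<] (1/d)) (𝓝 0) := by
      have hc : ContinuousAt (fun t : ℝ => Real.log (1/(d*t))) (1/d) := by
        have h2 : ContinuousAt (fun t : ℝ => 1/(d*t)) (1/d) := by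
          apply ContinuousAt.div continuousAt_const (by fun_prop)
          simp [hd.ne']
        exact (Real.continuousAt_log (by rw [h3]; norm_num)).comp h2
      have := hc.tendsto
      simp only [hεdef]
      rw [show Real.log (1/(d*(1/d))) = 0 by rw [h3]; simp] at this
      exact this.mono_left nhdsWithin_le_nhds
    refine tendsto_nhdsWithin_of_tendsto_nhds_of_eventually_within _ h1 ?_
    filter_upwards [hmem] with t ht
    have hdt : 0 < d * t := mul_pos hd ht.1
    have h4 : (1:ℝ) < 1/(d*t) := by
      rw [lt_div_iff₀ hdt]
      have : d * t < d * (1/d) := mul_lt_mul_of_pos_left ht.2 hd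
      simpa [hd.ne'] using this
    exact Real.log_pos h4
  -- the ratio
  set R : ℝ → ℝ := fun t => (∫ v in Set.Ioi (0:ℝ), (P t - P (t * Real.exp v)) ∂Pim) / P t
    with hRdef
  -- bounds
  have hbounds : ∀ t ∈ Set.Ioo (0:ℝ) (1/d),
      (Pim (Set.Ioi (ε t))).toReal ≤ R t ∧ R t ≤ (Pim (Set.Ioi (0:ℝ))).toReal := by
    intro t ht
    have hPt : 0 < P t := hTpos t ht.2
    have hdt : 0 < d * t := mul_pos hd ht.1
    have hεpos : 0 < ε t := by
      have h4 : (1:ℝ) < 1/(d*t) := by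
        rw [lt_div_iff₀ hdt]
        have : d * t < d * (1/d) := mul_lt_mul_of_pos_left ht.2 hd
        simpa [hd.ne'] using this
      exact Real.log_pos h4
    -- key: v ≥ ε t → P (t * exp v) = 0
    have hzero : ∀ v, ε t ≤ v → P (t * Real.exp v) = 0 := by
      intro v hv
      have hev : 1/(d*t) ≤ Real.exp v := by
        rw [← Real.exp_log (x := 1/(d*t)) (one_div_pos.2 hdt)]
        exact Real.exp_le_exp.2 hv
      have : 1/d ≤ t * Real.exp v := by
        have ht0 : t ≠ 0 := ht.1.ne'
        have h5 : (1/(d*t)) * t ≤ Real.exp v * t :=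
          mul_le_mul_of_nonneg_right hev ht.1.le
        have h6 : (1/(d*t)) * t = 1/d := by field_simp
        rw [mul_comm t]
        linarith
      simp [P, hT0 _ this]
    -- integrability
    have hmeasf : Measurable (fun v => P t - P (t * Real.exp v)) :=
      (measurable_const.sub (hPmeas.comp (by fun_prop)))
    have hint : IntegrableOn (fun v => P t - P (t * Real.exp v)) (Set.Ioi 0) Pim := by
      refine Integrable.mono' (integrable_const 1) hmeasf.aestronglyMeasurable ?_
      filter_upwards with v
      rw [Real.norm_eq_abs, abs_sub_le_iff]
      constructor
      · linarith [hP1 t, hPnn (t * Real.exp v)]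
      · linarith [hP1 (t * Real.exp v), hPnn t]
    have hnn : 0 ≤ᵐ[Pim.restrict (Set.Ioi 0)] fun v => P t - P (t * Real.exp v) := by
      filter_upwards [ae_restrict_mem measurableSet_Ioi] with v (hv : 0 < v)
      simp only [Pi.zero_apply]
      have : t ≤ t * Real.exp v := by
        nlinarith [Real.one_le_exp hv.le, ht.1]
      linarith [hPanti this]
    constructor
    · -- lower bound
      have h1 : ∫ v in Set.Ioi (ε t), (P t - P (t * Real.exp v)) ∂Pim
          ≤ ∫ v in Set.Ioi (0:ℝ), (P t - P (t * Real.exp v)) ∂Pim := by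
        refine setIntegral_mono_set hint hnn ?_
        exact HasSubset.Subset.eventuallyLE (Set.Ioi_subset_Ioi hεpos.le)
      have h2 : ∫ v in Set.Ioi (ε t), (P t - P (t * Real.exp v)) ∂Pim
          = (Pim (Set.Ioi (ε t))).toReal * P t := by
        rw [setIntegral_congr_fun measurableSet_Ioi
          (g := fun _ => P t) (fun v hv => by rw [hzero v (le_of_lt hv)]; ring)]
        rw [setIntegral_const]
        simp [smul_eq_mul, Measure.real_def]
      simp only [hRdef]
      rw [le_div_iff₀ hPt, ← h2]
      exact h1
    · -- upper bound
      have h1 : ∫ v in Set.Ioi (0:ℝ), (P t - P (t * Real.exp v)) ∂Pim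
          ≤ ∫ v in Set.Ioi (0:ℝ), (P t : ℝ) ∂Pim := by
        refine setIntegral_mono hint (integrableOn_const (measure_lt_top _ _).ne) ?_
        intro v
        simp only
        linarith [hPnn (t * Real.exp v)]
      rw [setIntegral_const] at h1
      simp only [hRdef]
      rw [div_le_iff₀ hPt]
      simpa [smul_eq_mul, Measure.real_def] using h1
  -- Tendsto R
  have hRtendsto : Tendsto R (𝓝[<] (1/d)) (𝓝 ((Pim (Set.Ioi (0:ℝ))).toReal)) := by
    have hlow : Tendsto (fun t => (Pim (Set.Ioi (ε t))).toReal) (𝓝[<] (1/d))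
        (𝓝 ((Pim (Set.Ioi (0:ℝ))).toReal)) := hIoi.comp hεt
    refine tendsto_of_tendsto_of_tendsto_of_le_of_le' hlow tendsto_const_nhds ?_ ?_
    · filter_upwards [hmem] with t ht using (hbounds t ht).1
    · filter_upwards [hmem] with t ht using (hbounds t ht).2
  -- final
  have hfinal : Tendsto (fun t => (R t + q) / d) (𝓝[<] (1/d))
      (𝓝 (((Pim (Set.Ioi (0:ℝ))).toReal + q) / d)) :=
    (hRtendsto.add tendsto_const_nhds).div_const d
  refine Tendsto.congr' ?_ hfinal
  filter_upwards [hmem] with t ht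
  have hPt : 0 < P t := hTpos t ht.2
  have h := heq t ⟨ht.1.le, ht.2⟩
  have hd' : d ≠ 0 := hd.ne'
  have hPt' : P t ≠ 0 := hPt.ne'
  show (R t + q) / d = (1/d - t) * k t / P t
  have key : (1/d - t) * k t * d
      = (∫ v in Set.Ioi (0:ℝ), (P t - P (t * Real.exp v)) ∂Pim) + q * P t := h
  simp only [hRdef]
  have hkey2 : (1/d - t) * k t
      = ((∫ v in Set.Ioi (0:ℝ), (P t - P (t * Real.exp v)) ∂Pim) + q * P t)/d := by
    rw [eq_div_iff hd.ne']; exact key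
  rw [hkey2]
  field_simp
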